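/- Let A be an m-th order n-dimensional tensor that is (m,ℓ)-colorable, i.e., there is a map φ : [n] → {1,...,m} with φ(i1)+···+φ(im) ≡ m/ℓ (mod m) whenever a_{i1...im} ≠ 0. Then A is spectral ℓ-symmetric: Spec(A) = e^{i2π/ℓ}·Spec(A). -/

import Mathlib

open BigOperators

/-- An order-`m`, dimension-`n` real tensor (hypermatrix). -/
abbrev Tensor (m n : ℕ) : Type := (Fin m → Fin n) → ℝ

/-- The primitive rotation `e^{i·2π/k}` of the complex plane. -/
noncomputable def rot (k : ℕ) : ℂ := Complex.exp (2 * (Real.pi : ℂ) * Complex.I / (k : ℂ))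

/-- A tensor is nonnegative if all its entries are nonnegative. -/
def Tensor.Nonneg {m n : ℕ} (A : Tensor m n) : Prop := ∀ α, 0 ≤ A α

/-- A tensor is symmetric if its entries are invariant under permutations of indices. -/
def Tensor.Symm {m n : ℕ} (A : Tensor m n) : Prop :=
  ∀ (σ : Equiv.Perm (Fin m)) (α : Fin m → Fin n), A (α ∘ σ) = A α

/-- Arc `(i,j)` of the digraph associated to `A`: some entry `a_{i i₂ … i_m} ≠ 0`
with `j` among the later indices. -/
def Tensor.Arc {m n : ℕ} [NeZero m] (A : Tensor m n) (i j : Fin n) : Prop :=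
  ∃ α : Fin m → Fin n, A α ≠ 0 ∧ α 0 = i ∧ ∃ k : Fin m, k ≠ 0 ∧ α k = j

/-- `A` is weakly irreducible if its associated digraph is strongly connected. -/
def Tensor.WeaklyIrreducible {m n : ℕ} [NeZero m] (A : Tensor m n) : Prop :=
  ∀ i j : Fin n, Relation.ReflTransGen A.Arc i j

/-- The eigenvalue equations `(A x^{m-1})_i = λ x_i^{m-1}` for all `i`. -/
def Tensor.EigEq {m n : ℕ} [NeZero m] (A : Tensor m n) (lam : ℂ) (x : Fin n → ℂ) : Prop :=
  ∀ i : Fin n,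
    (∑ α : Fin m → Fin n,
      if α 0 = i then (A α : ℂ) * ∏ k ∈ Finset.univ.erase (0 : Fin m), x (α k) else 0)
    = lam * x i ^ (m - 1)

/-- `lam` is an eigenvalue of the tensor `A`. -/
def Tensor.IsEig {m n : ℕ} [NeZero m] (A : Tensor m n) (lam : ℂ) : Prop :=
  ∃ x : Fin n → ℂ, x ≠ 0 ∧ A.EigEq lam x

/-- `A` is spectral `ℓ`-symmetric: its spectrum is invariant under rotation by `e^{i2π/ℓ}`. -/
def Tensor.SpectralSym {m n : ℕ} [NeZero m] (ℓ : ℕ) (A : Tensor m n) : Prop :=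
  ∀ lam : ℂ, A.IsEig lam ↔ A.IsEig (rot ℓ * lam)

/-- `A = e^{-iθ} D^{-(m-1)} A D` for the diagonal matrix `D = diag d`, entrywise. -/
def Tensor.DiagSim {m n : ℕ} [NeZero m] (A : Tensor m n) (θ : ℝ) (d : Fin n → ℂ) : Prop :=
  ∀ α : Fin m → Fin n,
    (A α : ℂ) = Complex.exp (-(θ : ℂ) * Complex.I) * d (α 0) ^ (-((m : ℤ) - 1)) * (A α : ℂ) *
      ∏ k ∈ Finset.univ.erase (0 : Fin m), d (α k)

/-- The set `𝔇^{(j)}` of normalized unimodular diagonal matrices `D` with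
`A = e^{-i2πj/ℓ} D^{-(m-1)} A D`. -/
def Tensor.DSet {m n : ℕ} [NeZero m] [NeZero n] (A : Tensor m n) (ℓ j : ℕ) :
    Set (Fin n → ℂ) :=
  {d | d 0 = 1 ∧ (∀ i, ‖d i‖ = 1) ∧ A.DiagSim (2 * Real.pi * j / ℓ) d}

/-- The set `𝔇 = ⋃_{j=0}^{ℓ-1} 𝔇^{(j)}`. -/
def Tensor.DFull {m n : ℕ} [NeZero m] [NeZero n] (A : Tensor m n) (ℓ : ℕ) :
    Set (Fin n → ℂ) :=
  ⋃ j ∈ Finset.range ℓ, A.DSet ℓ j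

/-- An `m`-uniform hypergraph on vertex set `Fin n`. -/
structure UHypergraph (m n : ℕ) where
  edges : Finset (Finset (Fin n))
  uniform : ∀ e ∈ edges, e.card = m

/-- The adjacency tensor of an `m`-uniform hypergraph. -/
noncomputable def UHypergraph.adjTensor {m n : ℕ} (G : UHypergraph m n) : Tensor m n :=
  fun α => if Finset.image α Finset.univ ∈ G.edges then (1 : ℝ) / (m - 1).factorial else 0

/-- A hypergraph is connected if every two vertices are joined by a walk. -/
def UHypergraph.Connected {m n : ℕ} (G : UHypergraph m n) : Prop :=
  ∀ i j : Fin n, Relation.ReflTransGen (fun u v => ∃ e ∈ G.edges, u ∈ e ∧ v ∈ e) i j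

lemma exp_natModEq {m : ℕ} (hm : (m:ℂ) ≠ 0) {a b : ℕ} (h : a ≡ b [MOD m]) :
    Complex.exp (2 * Real.pi * Complex.I * a / m) =
      Complex.exp (2 * Real.pi * Complex.I * b / m) := by
  obtain ⟨k, hk⟩ := h.dvd
  rw [Complex.exp_eq_exp_iff_exists_int]
  refine ⟨-k, ?_⟩
  have hc : (a : ℂ) = (b : ℂ) - (m : ℂ) * (k : ℂ) := by
    have := congrArg (fun z : ℤ => (z : ℂ)) hk
    push_cast at this
    linear_combination -this
  field_simp
  push_cast
  linear_combination hc

lemma rot_pow (ℓ : ℕ) (hℓ : 0 < ℓ) : rot ℓ ^ ℓ = 1 := by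
  rw [rot, ← Complex.exp_nat_mul]
  have : (ℓ : ℂ) ≠ 0 := Nat.cast_ne_zero.mpr hℓ.ne'
  rw [show (ℓ:ℂ) * (2 * (Real.pi : ℂ) * Complex.I / (ℓ : ℂ)) = 2 * Real.pi * Complex.I by field_simp,
    Complex.exp_two_pi_mul_I]

lemma stmt8_forward {m n ℓ : ℕ} [NeZero m] [NeZero n] (hℓ : 0 < ℓ) (hdvd : ℓ ∣ m)
    (A : Tensor m n) (φ : Fin n → ℕ)
    (hcol : ∀ α : Fin m → Fin n, A α ≠ 0 → (∑ k : Fin m, φ (α k)) ≡ m / ℓ [MOD m])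
    (lam : ℂ) (h : A.IsEig lam) : A.IsEig (rot ℓ * lam) := by
  obtain ⟨x, hx, hex⟩ := h
  have hm : (m:ℂ) ≠ 0 := Nat.cast_ne_zero.mpr (NeZero.ne m)
  set d : Fin n → ℂ := fun i => Complex.exp (2 * Real.pi * Complex.I * (φ i : ℂ) / m) with hd
  have hdne : ∀ i, d i ≠ 0 := fun i => Complex.exp_ne_zero _
  have hdpow : ∀ i, d i ^ m = 1 := by
    intro i
    rw [hd, ← Complex.exp_nat_mul]
    have : (m:ℂ) * (2 * Real.pi * Complex.I * (φ i : ℂ) / m) = (φ i : ℤ) * (2 * Real.pi * Complex.I) := by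
      push_cast; field_simp
    rw [this, Complex.exp_int_mul_two_pi_mul_I]
  -- full product over all indices
  have hprod : ∀ α : Fin m → Fin n, A α ≠ 0 →
      ∏ k : Fin m, d (α k) = rot ℓ := by
    intro α hA
    have h1 : ∏ k : Fin m, d (α k) =
        Complex.exp (2 * Real.pi * Complex.I * (∑ k : Fin m, φ (α k) : ℕ) / m) := by
      rw [← Complex.exp_sum]
      congr 1
      push_cast
      rw [Finset.mul_sum, Finset.sum_div]
    rw [h1, exp_natModEq hm (hcol α hA)]
    rw [rot]
    congr 1
    obtain ⟨c, hc⟩ := hdvd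
    have hc' : m / ℓ = c := by rw [hc, Nat.mul_div_cancel_left _ hℓ]
    rw [hc']
    have hℓc : (ℓ:ℂ) ≠ 0 := Nat.cast_ne_zero.mpr hℓ.ne'
    have : (m:ℂ) = ℓ * c := by push_cast [hc]; ring
    rw [this]
    have hcne : (c:ℂ) ≠ 0 := by
      have : c ≠ 0 := by rintro rfl; exact NeZero.ne m (by omega)
      exact Nat.cast_ne_zero.mpr this
    field_simp
  -- product over erased
  have hprod' : ∀ α : Fin m → Fin n, A α ≠ 0 →
      ∏ k ∈ Finset.univ.erase (0 : Fin m), d (α k) = rot ℓ * (d (α 0))⁻¹ := by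
    intro α hA
    have := hprod α hA
    rw [← Finset.prod_erase_mul Finset.univ _ (Finset.mem_univ (0 : Fin m))] at this
    rw [eq_mul_inv_iff_mul_eq₀ (hdne (α 0))]
    exact this
  refine ⟨fun i => d i * x i, ?_, ?_⟩
  · intro h0
    apply hx
    funext i
    have := congrFun h0 i
    simp only [Pi.zero_apply] at this ⊢
    exact (mul_eq_zero.mp this).resolve_left (hdne i)
  · intro i
    have key : (∑ α : Fin m → Fin n,
        if α 0 = i then (A α : ℂ) * ∏ k ∈ Finset.univ.erase (0 : Fin m), (d (α k) * x (α k)) else 0)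
        = rot ℓ * (d i)⁻¹ *
          (∑ α : Fin m → Fin n,
            if α 0 = i then (A α : ℂ) * ∏ k ∈ Finset.univ.erase (0 : Fin m), x (α k) else 0) := by
      rw [Finset.mul_sum]
      refine Finset.sum_congr rfl ?_
      intro α _
      by_cases h0 : α 0 = i
      · simp only [h0, if_pos rfl]
        by_cases hA : A α = 0
        · simp [hA]
        · rw [Finset.prod_mul_distrib, hprod' α hA, h0]
          simp only [if_true]
          ring
      · simp [h0]
    rw [key, hex i]
    have hdi : d i ^ (m - 1) = (d i)⁻¹ := by
      have h1 : d i ^ (m-1) * d i = 1 := by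
        rw [← pow_succ]
        have : m - 1 + 1 = m := Nat.succ_pred_eq_of_pos (Nat.pos_of_ne_zero (NeZero.ne m))
        rw [this, hdpow]
      exact eq_inv_of_mul_eq_one_left h1
    rw [mul_pow, hdi]
    field_simp

/-- an `(m,ℓ)`-colorable tensor is spectral `ℓ`-symmetric. -/
theorem stmt8 {m n ℓ : ℕ} [NeZero m] [NeZero n] (hℓ : 0 < ℓ) (hdvd : ℓ ∣ m)
    (A : Tensor m n) (φ : Fin n → ℕ) (hφ : ∀ v, 1 ≤ φ v ∧ φ v ≤ m)
    (hcol : ∀ α : Fin m → Fin n, A α ≠ 0 → (∑ k : Fin m, φ (α k)) ≡ m / ℓ [MOD m]) :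
    A.SpectralSym ℓ := by
  intro lam
  constructor
  · exact stmt8_forward hℓ hdvd A φ hcol lam
  · intro h
    have iter : ∀ j, A.IsEig (rot ℓ ^ j * (rot ℓ * lam)) := by
      intro j
      induction j with
      | zero => simpa using h
      | succ k ih =>
        have := stmt8_forward hℓ hdvd A φ hcol _ ih
        rw [show rot ℓ ^ (k+1) * (rot ℓ * lam) = rot ℓ * (rot ℓ ^ k * (rot ℓ * lam)) by ring]
        exact this
    have h2 := iter (ℓ - 1)
    have heq : rot ℓ ^ (ℓ - 1) * (rot ℓ * lam) = lam := by
      rw [← mul_assoc, ← pow_succ, show ℓ - 1 + 1 = ℓ from Nat.succ_pred_eq_of_pos hℓ, rot_pow ℓ hℓ, one_mul]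
    rwa [heq] at h2
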